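/- There exists a logic program with preferences (P,<) having an answer set S that is preferred under the fragment-based semantics G but not under GNO (i.e., G is not included in GNO). -/
import Mathlib


/-- A literal over atoms `A`: `(true, a)` is the atom `a`, `(false, a)` is `¬ a`. -/
abbrev Lit (A : Type) := Bool × A

/-- A rule with head, positive body and negative body. -/
structure Rule (A : Type) where
  head : Lit A
  pos : Set (Lit A)
  neg : Set (Lit A)

variable {A : Type}

/-- Heads of a set of rules. -/
def headSet (R : Set (Rule A)) : Set (Lit A) := Rule.head '' R

/-- `R ⊆ P` positively satisfies `P`. -/
def PosSat (P R : Set (Rule A)) : Prop :=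
  R ⊆ P ∧ ∀ r ∈ P, r.pos ⊆ headSet R → r ∈ R

/-- The minimal set of rules positively satisfying `P`. -/
def MP (P : Set (Rule A)) : Set (Rule A) := ⋂₀ {R | PosSat P R}

/-- A set of rules defeats a rule. -/
def defeatsRule (R : Set (Rule A)) (r : Rule A) : Prop :=
  (headSet R ∩ r.neg).Nonempty

/-- A set of rules defeats a set of rules. -/
def defeatsSet (R₁ R₂ : Set (Rule A)) : Prop := ∃ r ∈ R₂, defeatsRule R₁ r

/-- The reduct `P^R` removes each rule defeated by `R`. -/
def reduct (P R : Set (Rule A)) : Set (Rule A) := {r ∈ P | ¬ defeatsRule R r}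

/-- `R ⊆ P` is a generating set of `P` iff `R = MP (P^R)`. -/
def GenSet (P R : Set (Rule A)) : Prop := R ⊆ P ∧ R = MP (reduct P R)

/-- A set of literals is consistent iff it contains no complementary pair. -/
def Consistent (S : Set (Lit A)) : Prop :=
  ∀ a : A, ¬ (((true, a) ∈ S) ∧ ((false, a) ∈ S))

/-- Answer sets via generating sets. -/
def AnswerSet (P : Set (Rule A)) (S : Set (Lit A)) : Prop :=
  Consistent S ∧ ∃ R, GenSet P R ∧ headSet R = S

/-- `Γ_S(P)`: rules whose positive body is in `S` and negative body disjoint from `S`. -/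
def Gamma (S : Set (Lit A)) (P : Set (Rule A)) : Set (Rule A) :=
  {r ∈ P | r.pos ⊆ S ∧ r.neg ∩ S = ∅}

/-- Fragments of a program. -/
def Frag (P : Set (Rule A)) : Set (Set (Rule A)) := {R | R ⊆ P ∧ MP R = R}

/-- Fragment reduct: remove fragments defeated by a member of `E`. -/
def fragReduct (P : Set (Rule A)) (E : Set (Set (Rule A))) : Set (Set (Rule A)) :=
  {X ∈ Frag P | ¬ ∃ Y ∈ E, defeatsSet Y X}

/-- Stable fragment sets. -/
def StableFragSet (P : Set (Rule A)) (E : Set (Set (Rule A))) : Prop :=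
  E ⊆ Frag P ∧ fragReduct P E = E

/-- Mutually defeating (conflicting) sets of rules. -/
def Conflicting (X Y : Set (Rule A)) : Prop := defeatsSet X Y ∧ defeatsSet Y X

/-- `X` overrides `Y` w.r.t. the preference relation `lt`. -/
def Overrides (lt : Rule A → Rule A → Prop) (X Y : Set (Rule A)) : Prop :=
  Conflicting X Y ∧
    ∀ r₁ ∈ X, defeatsRule Y r₁ → ∃ r₂ ∈ Y, defeatsRule X r₂ ∧ lt r₂ r₁

/-- Preferred fragment reduct (semantics G). -/
def prefFragReduct (lt : Rule A → Rule A → Prop) (P : Set (Rule A))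
    (E : Set (Set (Rule A))) : Set (Set (Rule A)) :=
  {X ∈ Frag P | ¬ ∃ Y ∈ E, defeatsSet Y X ∧ ¬ Overrides lt X Y}

/-- Preferred stable fragment sets (semantics G). -/
def PrefStableFragSet (lt : Rule A → Rule A → Prop) (P : Set (Rule A))
    (E : Set (Set (Rule A))) : Prop :=
  E ⊆ Frag P ∧ prefFragReduct lt P E = E

/-- Preferred answer sets under the fragment-based semantics G. -/
def GPrefAnswerSet (lt : Rule A → Rule A → Prop) (P : Set (Rule A))
    (S : Set (Lit A)) : Prop :=
  Consistent S ∧ ∃ E, PrefStableFragSet lt P E ∧ headSet (⋃₀ E) = S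

/-- `T(r,R)` for semantics GNO. -/
def Trules (lt : Rule A → Rule A → Prop) (r : Rule A) (R : Set (Rule A)) :
    Set (Rule A) :=
  MP {p ∈ R | ¬ lt p r}

/-- GNO reduct: remove rules `r` with `body⁻(r) ∩ head(T(r,R)) ≠ ∅`. -/
def gnoReduct (lt : Rule A → Rule A → Prop) (P R : Set (Rule A)) : Set (Rule A) :=
  {r ∈ P | ¬ (r.neg ∩ headSet (Trules lt r R)).Nonempty}

/-- GNO-preferred generating sets. -/
def GNOPrefGen (lt : Rule A → Rule A → Prop) (P R : Set (Rule A)) : Prop :=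
  GenSet P R ∧ R = MP (gnoReduct lt P R)

/-- GNO-preferred answer sets. -/
def GNOPrefAnswerSet (lt : Rule A → Rule A → Prop) (P : Set (Rule A))
    (S : Set (Lit A)) : Prop :=
  Consistent S ∧ ∃ R, GNOPrefGen lt P R ∧ headSet R = S

/-- A rule defeats a rule. -/
def defeats (r₁ r₂ : Rule A) : Prop := r₁.head ∈ r₂.neg

/-- `r₁` directly overrides `r₂` w.r.t. `lt`. -/
def DirOverrides (lt : Rule A → Rule A → Prop) (r₁ r₂ : Rule A) : Prop :=
  (defeats r₁ r₂ ∧ defeats r₂ r₁) ∧ lt r₂ r₁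

/-- D-reduct for the direct-conflict semantics. -/
def dReduct (lt : Rule A → Rule A → Prop) (P R : Set (Rule A)) : Set (Rule A) :=
  {r₁ ∈ P | ¬ ∃ r₂ ∈ R, defeats r₂ r₁ ∧ ¬ DirOverrides lt r₁ r₂}

/-- D-preferred generating sets. -/
def DPrefGen (lt : Rule A → Rule A → Prop) (P R : Set (Rule A)) : Prop :=
  R = MP (dReduct lt P R)

/-- D-preferred answer sets. -/
def DPrefAnswerSet (lt : Rule A → Rule A → Prop) (P : Set (Rule A))
    (S : Set (Lit A)) : Prop :=
  Consistent S ∧ ∃ R, DPrefGen lt P R ∧ headSet R = S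

/-- Stratified programs. -/
def Stratified (P : Set (Rule A)) : Prop :=
  ∃ lam : Lit A → ℕ, ∀ r ∈ P,
    (∀ l ∈ r.pos, lam l ≤ lam r.head) ∧ (∀ l ∈ r.neg, lam l < lam r.head)


namespace GnoWitness

def r1 : Rule ℕ := ⟨(true, 0), ∅, {(true, 1)}⟩
def r2 : Rule ℕ := ⟨(true, 1), ∅, ∅⟩
def Pw : Set (Rule ℕ) := {r1, r2}
def ltw (x y : Rule ℕ) : Prop := x = r2 ∧ y = r1

lemma r1_ne_r2 : r1 ≠ r2 := by
  intro h
  have := congrArg Rule.head h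
  simp [r1, r2] at this

lemma MP_eq (Q : Set (Rule ℕ)) (h : ∀ r ∈ Q, r.pos = (∅ : Set (Lit ℕ))) :
    MP Q = Q := by
  apply Set.Subset.antisymm
  · intro r hr
    exact Set.mem_sInter.mp hr Q ⟨subset_rfl, fun s hs _ => hs⟩
  · intro r hr
    apply Set.mem_sInter.mpr
    intro R hR
    exact hR.2 r hr (by rw [h r hr]; exact Set.empty_subset _)

lemma pos_empty : ∀ r ∈ Pw, r.pos = (∅ : Set (Lit ℕ)) := by
  rintro r (rfl | rfl) <;> rfl

lemma MP_of_sub {Q : Set (Rule ℕ)} (h : Q ⊆ Pw) : MP Q = Q :=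
  MP_eq Q fun r hr => pos_empty r (h hr)

lemma headSet_r2 : headSet ({r2} : Set (Rule ℕ)) = {(true, 1)} := by
  simp [headSet, r2]

lemma not_defeat_r2set (Y : Set (Rule ℕ)) (X : Set (Rule ℕ))
    (hX : X ⊆ {r2}) : ¬ defeatsSet Y X := by
  rintro ⟨r, hr, hd⟩
  have : r = r2 := hX hr
  subst this
  rcases hd with ⟨l, hl, hl2⟩
  simp [r2] at hl2

lemma defeatsRule_r2_r1 : defeatsRule ({r2} : Set (Rule ℕ)) r1 := by
  refine ⟨(true, 1), ?_, ?_⟩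
  · rw [headSet_r2]; rfl
  · simp [r1]

lemma reduct_eq : reduct Pw ({r2} : Set (Rule ℕ)) = {r2} := by
  apply Set.Subset.antisymm
  · rintro r ⟨(rfl | rfl), hnd⟩
    · exact absurd defeatsRule_r2_r1 hnd
    · rfl
  · rintro r rfl
    refine ⟨Or.inr rfl, ?_⟩
    rintro ⟨l, _, hl⟩
    simp [r2] at hl

lemma genSet_r2 : GenSet Pw ({r2} : Set (Rule ℕ)) := by
  constructor
  · intro r hr; exact Or.inr hr
  · rw [reduct_eq, MP_of_sub (by intro r hr; exact Or.inr hr)]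

lemma frag_all {X : Set (Rule ℕ)} (hX : X ⊆ Pw) : X ∈ Frag Pw :=
  ⟨hX, MP_of_sub hX⟩

def Ew : Set (Set (Rule ℕ)) := {∅, {r2}}

lemma Ew_sub_sing : ∀ X ∈ Ew, X ⊆ ({r2} : Set (Rule ℕ)) := by
  rintro X (rfl | rfl)
  · exact Set.empty_subset _
  · exact subset_rfl

lemma not_overrides (X : Set (Rule ℕ)) : ¬ Overrides ltw X {r2} := by
  rintro ⟨⟨hc, _⟩, _⟩
  exact not_defeat_r2set X {r2} subset_rfl hc

lemma prefStable : PrefStableFragSet ltw Pw Ew := by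
  constructor
  · intro X hX
    exact frag_all ((Ew_sub_sing X hX).trans (by intro r hr; exact Or.inr hr))
  · apply Set.Subset.antisymm
    · rintro X ⟨hXf, hnd⟩
      have hr1 : r1 ∉ X := by
        intro h1
        exact hnd ⟨{r2}, Or.inr rfl, ⟨r1, h1, defeatsRule_r2_r1⟩,
          not_overrides X⟩
      have hXs : X ⊆ ({r2} : Set (Rule ℕ)) := by
        intro r hr
        rcases hXf.1 hr with rfl | rfl
        · exact absurd hr hr1
        · rfl
      rcases Set.subset_singleton_iff_eq.mp hXs with rfl | rfl
      · exact Or.inl rfl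
      · exact Or.inr rfl
    · intro X hX
      refine ⟨frag_all ((Ew_sub_sing X hX).trans (by intro r hr; exact Or.inr hr)), ?_⟩
      rintro ⟨Y, _, hd, _⟩
      exact not_defeat_r2set Y X (Ew_sub_sing X hX) hd

lemma sUnion_Ew : ⋃₀ Ew = ({r2} : Set (Rule ℕ)) := by
  apply Set.Subset.antisymm
  · rintro r ⟨X, hX, hr⟩
    exact Ew_sub_sing X hX hr
  · rintro r rfl
    exact ⟨{r2}, Or.inr rfl, rfl⟩

lemma gnoReduct_eq : gnoReduct ltw Pw ({r2} : Set (Rule ℕ)) = Pw := by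
  apply Set.Subset.antisymm
  · exact fun r hr => hr.1
  · intro r hr
    refine ⟨hr, ?_⟩
    rcases hr with rfl | rfl
    · -- r = r1 : T(r1,{r2}) = MP ∅ = ∅
      have hT : Trules ltw r1 ({r2} : Set (Rule ℕ)) = ∅ := by
        have : {p ∈ ({r2} : Set (Rule ℕ)) | ¬ ltw p r1} = (∅ : Set (Rule ℕ)) := by
          apply Set.eq_empty_iff_forall_notMem.mpr
          rintro p ⟨rfl, hp⟩
          exact hp ⟨rfl, rfl⟩
        rw [Trules, this, MP_eq _ (by rintro r ⟨⟩)]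
      rw [hT]
      rintro ⟨l, _, ⟨p, hp, _⟩⟩
      exact hp
    · rintro ⟨l, hl, _⟩
      simp [r2] at hl

end GnoWitness

/-- G is not included in GNO: some program with preferences has an
answer set that is G-preferred but not GNO-preferred. -/
theorem g_not_subset_gno :
    ∃ (P : Set (Rule ℕ)) (lt : Rule ℕ → Rule ℕ → Prop) (S : Set (Lit ℕ)),
      P.Finite ∧ Transitive lt ∧ (∀ r₁ r₂, lt r₁ r₂ → ¬ lt r₂ r₁) ∧
      AnswerSet P S ∧ GPrefAnswerSet lt P S ∧ ¬ GNOPrefAnswerSet lt P S := by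
  classical
  open GnoWitness in
  refine ⟨GnoWitness.Pw, GnoWitness.ltw, {(true, 1)}, ?_, ?_, ?_, ?_, ?_, ?_⟩
  · exact (Set.finite_singleton _).insert _
  · rintro a b c ⟨rfl, rfl⟩ ⟨h, _⟩
    exact absurd h GnoWitness.r1_ne_r2
  · rintro a b ⟨rfl, rfl⟩ ⟨h, _⟩
    exact GnoWitness.r1_ne_r2 h
  · exact ⟨by rintro a ⟨h1, h2⟩; simp at h1 h2,
      {GnoWitness.r2}, GnoWitness.genSet_r2, GnoWitness.headSet_r2⟩
  · exact ⟨by rintro a ⟨h1, h2⟩; simp at h1 h2,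
      GnoWitness.Ew, GnoWitness.prefStable,
      by rw [GnoWitness.sUnion_Ew, GnoWitness.headSet_r2]⟩
  · rintro ⟨-, R, ⟨⟨hRP, -⟩, hgno⟩, hhead⟩
    have hr1 : GnoWitness.r1 ∉ R := by
      intro h1
      have : ((true, 0) : Lit ℕ) ∈ headSet R := ⟨GnoWitness.r1, h1, rfl⟩
      rw [hhead] at this
      simp at this
    have hRsub : R ⊆ ({GnoWitness.r2} : Set (Rule ℕ)) := by
      intro r hr
      rcases hRP hr with rfl | rfl
      · exact absurd hr hr1
      · rfl
    have hR : R = {GnoWitness.r2} := by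
      rcases Set.subset_singleton_iff_eq.mp hRsub with rfl | rfl
      · exfalso
        have : ((true, 1) : Lit ℕ) ∈ headSet (∅ : Set (Rule ℕ)) := by
          rw [hhead]; rfl
        rcases this with ⟨r, hr, -⟩
        exact hr
      · rfl
    subst hR
    rw [GnoWitness.gnoReduct_eq,
      GnoWitness.MP_of_sub subset_rfl] at hgno
    have : GnoWitness.r1 ∈ ({GnoWitness.r2} : Set (Rule ℕ)) := by
      rw [hgno]; exact Or.inl rfl
    exact GnoWitness.r1_ne_r2 this
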